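/- Under the common-factor hypothesis f_n = f_{n−1}·h, f_{n−2} = f_{n−3}·h with h linear, the discriminant-resultants satisfy DR_{n,r}(f_n, f_{n−2}) = (−1)^{n−1} res(h, f_{n−1})² · DR_{n−1,r}(f_{n−1}, f_{n−3}) for all 0 ≤ r ≤ n−1. -/

import Mathlib

open Polynomial Finset

/-- The resultant of two binary forms of (formal) degrees `d` and `e`, given by their
dehomogenizations. -/
noncomputable def res {k : Type*} [CommRing k] (d e : ℕ) (p q : Polynomial k) : k :=
  (-1 : k) ^ (d * e) *
    Matrix.det (Matrix.of fun i j : Fin (d + e) =>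
      if (i : ℕ) < e then
        (if (i : ℕ) ≤ (j : ℕ) ∧ (j : ℕ) ≤ d + (i : ℕ) then
          p.coeff (d + (i : ℕ) - (j : ℕ)) else 0)
      else
        (if (i : ℕ) - e ≤ (j : ℕ) ∧ (j : ℕ) ≤ (i : ℕ) then
          q.coeff ((i : ℕ) - (j : ℕ)) else 0))

/-- The bracket `[u,v] = u₀v₁ - v₀u₁`. -/
def bracket {k : Type*} [CommRing k] (u v : Fin 2 → k) : k := u 0 * v 1 - v 0 * u 1

/-- The numerator of the discriminant-resultant generating polynomial:
`res(f_n, x ∂ₓ f_n + t·x·y·f_{n-2})`, computed over `k[t]`. -/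
noncomputable def DRnum {k : Type*} [CommRing k] (n : ℕ) (p q : Polynomial k) :
    Polynomial k :=
  res n n (p.map (Polynomial.C : k →+* Polynomial k))
    (Polynomial.X * (Polynomial.derivative p).map (Polynomial.C : k →+* Polynomial k) +
      Polynomial.C (Polynomial.X : Polynomial k) * Polynomial.X *
        (q.map (Polynomial.C : k →+* Polynomial k)))

/-- The `r`-th discriminant-resultant `DR_{n,r}`: the coefficient of `t^r` in
`res(f_n, x ∂ₓ f_n + t·x·y·f_{n-2}) / (a₀ aₙ)`. -/
noncomputable def DR {k : Type*} [Field k] (n r : ℕ) (p q : Polynomial k) : k :=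
  (DRnum n p q).coeff r / (p.coeff 0 * p.coeff n)

/-- Under the common-factor hypothesis `f_n = f_{n-1}·h`, `f_{n-2} = f_{n-3}·h` with `h`
linear, `DR_{n,r}(f_n, f_{n-2}) = (-1)^{n-1} res(h, f_{n-1})² · DR_{n-1,r}(f_{n-1}, f_{n-3})`
for all `0 ≤ r ≤ n-1`. -/
noncomputable def Syl {R : Type*} [CommRing R] (d e : ℕ) (p q : Polynomial R) :
    Matrix (Fin (d + e)) (Fin (d + e)) R :=
  Matrix.of fun i j =>
    if (i : ℕ) < e then (p * X ^ (e - 1 - (i : ℕ))).coeff (d + e - 1 - (j : ℕ))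
    else (q * X ^ (d + e - 1 - (i : ℕ))).coeff (d + e - 1 - (j : ℕ))

lemma det_Syl_step {R : Type*} [CommRing R] (d e : ℕ) (he : 1 ≤ e) (α : R) (f1 q : Polynomial R)
    (hf1 : f1.natDegree ≤ d) (hq : q.natDegree ≤ e) :
    (Syl (d + 1) e ((X - C α) * f1) q).det = q.eval α * (Syl d e f1 q).det := by
  set p : Polynomial R := (X - C α) * f1 with hp
  have hN : d + e + 1 = (d + 1) + e := by omega
  set S : Matrix (Fin (d+e+1)) (Fin (d+e+1)) R :=
    (Syl (d+1) e p q).submatrix (finCongr hN) (finCongr hN) with hSdef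
  have hdetS : S.det = (Syl (d+1) e p q).det := Matrix.det_submatrix_equiv_self _ _
  set ρ : Fin (d+e+1) → Polynomial R :=
    fun i => if (i:ℕ) < e then p * X ^ (e-1-(i:ℕ)) else q * X ^ (d+e-(i:ℕ)) with hρ
  have hS : ∀ i j : Fin (d+e+1), S i j = (ρ i).coeff (d+e-(j:ℕ)) := by
    intro i j
    show Syl (d+1) e p q (finCongr hN i) (finCongr hN j) = _
    simp only [Syl, Matrix.of_apply, finCongr_apply, Fin.coe_cast, hρ]
    have h1 : d+1+e-1 = d+e := by omega
    rw [h1]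
    split_ifs <;> rfl
  set Hf : Polynomial R → ℕ → R :=
    fun w j => ∑ l ∈ Finset.range (j+1), w.coeff (d+e-l) * α^(j-l) with hHf
  set U : Matrix (Fin (d+e+1)) (Fin (d+e+1)) R :=
    Matrix.of (fun l j => if (l:ℕ) ≤ (j:ℕ) then α^((j:ℕ)-(l:ℕ)) else 0) with hU
  have hdetU : U.det = 1 := by
    rw [Matrix.det_of_upperTriangular]
    · rw [Finset.prod_congr rfl (fun i _ => show U i i = 1 by
        simp [hU, Nat.sub_self]), Finset.prod_const_one]
    · intro i j hij
      simp only [id] at hij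
      simp only [hU, Matrix.of_apply]
      rw [Fin.lt_def] at hij
      rw [if_neg (by omega)]
  set V : Matrix (Fin (d+e+1)) (Fin (d+e+1)) R :=
    Matrix.of (fun i l => if l = i then 1 else
      if (l:ℕ) = (i:ℕ)+1 ∧ e ≤ (i:ℕ) then -α else 0) with hV
  have hdetV : V.det = 1 := by
    rw [Matrix.det_of_upperTriangular]
    · rw [Finset.prod_congr rfl (fun i _ => show V i i = 1 by simp [hV]),
        Finset.prod_const_one]
    · intro i j hij
      simp only [id] at hij
      simp only [hV, Matrix.of_apply]
      rw [Fin.lt_def] at hij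
      rw [if_neg (by intro hc; rw [hc] at hij; omega), if_neg (by omega)]
  have hSU : ∀ (i j : Fin (d+e+1)), (S * U) i j = Hf (ρ i) j := by
    intro i j
    rw [Matrix.mul_apply]
    have h1 : ∀ l : Fin (d+e+1), S i l * U l j
        = (ρ i).coeff (d+e-(l:ℕ)) * (if (l:ℕ) ≤ (j:ℕ) then α^((j:ℕ)-(l:ℕ)) else 0) := by
      intro l; rw [hS]; rfl
    rw [Finset.sum_congr rfl (fun l _ => h1 l)]
    rw [Fin.sum_univ_eq_sum_range
      (fun l => (ρ i).coeff (d+e-l) * (if l ≤ (j:ℕ) then α^((j:ℕ)-l) else 0)) (d+e+1)]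
    have h2 : ∑ l ∈ Finset.range (d+e+1),
          (ρ i).coeff (d+e-l) * (if l ≤ (j:ℕ) then α^((j:ℕ)-l) else 0)
        = ∑ l ∈ Finset.range ((j:ℕ)+1),
          (ρ i).coeff (d+e-l) * (if l ≤ (j:ℕ) then α^((j:ℕ)-l) else 0) := by
      refine (Finset.sum_subset (Finset.range_subset_range.mpr (by have := j.isLt; omega)) ?_).symm
      intro x hx hnx
      rw [if_neg (by simp only [Finset.mem_range] at hx hnx; omega), mul_zero]
    rw [h2, hHf]
    refine Finset.sum_congr rfl fun l hl => ?_
    rw [if_pos (by simp only [Finset.mem_range] at hl; omega)]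
  have hrecgen : ∀ (w : Polynomial R) (jn : ℕ),
      Hf w (jn+1) = Hf w jn * α + w.coeff (d+e-(jn+1)) := by
    intro w jn
    simp only [hHf]
    rw [Finset.sum_range_succ, Nat.sub_self, pow_zero, mul_one, Finset.sum_mul]
    congr 1
    refine Finset.sum_congr rfl fun l hl => ?_
    simp only [Finset.mem_range] at hl
    rw [mul_assoc, ← pow_succ]
    congr 2
    omega
  have heval : ∀ w : Polynomial R, w.natDegree ≤ d+e → Hf w (d+e) = w.eval α := by
    intro w hw
    have hrefl := Finset.sum_range_reflect (fun m => w.coeff m * α^m) (d+e+1)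
    simp only [Nat.add_sub_cancel] at hrefl
    simp only [hHf]
    rw [hrefl, Polynomial.eval_eq_sum_range' (by omega : w.natDegree < d+e+1)]
  have hcoeffXC : ∀ (w : Polynomial R) (m : ℕ), ((X - C α) * w).coeff m
      = (if 1 ≤ m then w.coeff (m-1) else 0) - α * w.coeff m := by
    intro w m
    rw [sub_mul, coeff_sub, coeff_C_mul]
    congr 1
    cases m with
    | zero => simp [Polynomial.mul_coeff_zero]
    | succ m => rw [Polynomial.coeff_X_mul, if_pos (by omega), Nat.add_sub_cancel]
  have hshift : ∀ w : Polynomial R, w.natDegree ≤ d+e-1 → ∀ jn : ℕ, jn ≤ d+e-1 →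
      Hf ((X - C α) * w) jn = w.coeff (d+e-1-jn) := by
    intro w hw jn
    induction jn with
    | zero =>
      intro _
      simp only [hHf]
      rw [Finset.sum_range_one, Nat.sub_zero, Nat.sub_zero, pow_zero, mul_one, hcoeffXC,
        if_pos (by omega), coeff_eq_zero_of_natDegree_lt (by omega : w.natDegree < d+e),
        mul_zero, sub_zero]
      rfl
    | succ jn ih =>
      intro hjn
      rw [hrecgen, ih (by omega), hcoeffXC, if_pos (by omega)]
      have e1 : d+e-(jn+1) = d+e-1-jn := by omega
      have e2 : d+e-1-jn-1 = d+e-1-(jn+1) := by omega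
      rw [e1, e2]
      ring
  have Hf_lin : ∀ (w1 w2 : Polynomial R) (a : R) (j : ℕ),
      Hf (w1 - C a * w2) j = Hf w1 j - a * Hf w2 j := by
    intro w1 w2 a j
    simp only [hHf, coeff_sub, coeff_C_mul, sub_mul, Finset.sum_sub_distrib, Finset.mul_sum]
    congr 1
    refine Finset.sum_congr rfl fun l _ => ?_
    ring
  have hVM : ∀ (M : Matrix (Fin (d+e+1)) (Fin (d+e+1)) R) (i j : Fin (d+e+1)),
      (V * M) i j = M i j + (if h2 : e ≤ (i:ℕ) ∧ (i:ℕ) + 1 < d+e+1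
        then -α * M ⟨(i:ℕ)+1, h2.2⟩ j else 0) := by
    intro M i j
    rw [Matrix.mul_apply]
    by_cases h2 : e ≤ (i:ℕ) ∧ (i:ℕ)+1 < d+e+1
    · rw [dif_pos h2]
      set i1 : Fin (d+e+1) := ⟨(i:ℕ)+1, h2.2⟩ with hi1
      have hiff : ∀ l : Fin (d+e+1), l = i1 ↔ (l:ℕ) = (i:ℕ)+1 := by
        intro l; rw [Fin.ext_iff]
      have hV' : ∀ l, V i l = (if l = i then (1:R) else 0) + (if l = i1 then -α else 0) := by
        intro l
        simp only [hV, Matrix.of_apply]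
        by_cases hl : l = i
        · have hne : ¬ l = i1 := by
            rw [hiff]; have hv := congrArg Fin.val hl; omega
          rw [if_pos hl, if_pos hl, if_neg hne, add_zero]
        · rw [if_neg hl, if_neg hl, zero_add]
          by_cases hl2 : l = i1
          · rw [if_pos hl2, if_pos ⟨(hiff l).mp hl2, h2.1⟩]
          · rw [if_neg hl2, if_neg (fun hc => hl2 ((hiff l).mpr hc.1))]
      rw [Finset.sum_congr rfl (fun l _ => by rw [hV', add_mul])]
      rw [Finset.sum_add_distrib]
      congr 1
      · simp [ite_mul, one_mul, zero_mul, Finset.sum_ite_eq']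
      · simp [ite_mul, zero_mul, Finset.sum_ite_eq']
    · rw [dif_neg h2, add_zero]
      have hV' : ∀ l : Fin (d+e+1), V i l = (if l = i then (1:R) else 0) := by
        intro l
        simp only [hV, Matrix.of_apply]
        by_cases hl : l = i
        · rw [if_pos hl, if_pos hl]
        · rw [if_neg hl, if_neg hl, if_neg ?_]
          intro hc
          exact h2 ⟨hc.2, by have := l.isLt; omega⟩
      rw [Finset.sum_congr rfl (fun l _ => by rw [hV'])]
      simp [ite_mul, one_mul, zero_mul, Finset.sum_ite_eq']
  set σ : Fin (d+e+1) → Polynomial R := fun i =>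
    if (i:ℕ) < e then f1 * X ^ (e-1-(i:ℕ)) else q * X ^ (d+e-1-(i:ℕ)) with hσ
  have hσdeg : ∀ i : Fin (d+e+1), (i:ℕ) < d+e → (σ i).natDegree ≤ d+e-1 := by
    intro i hi
    simp only [hσ]
    split_ifs with hie
    · refine natDegree_mul_le.trans ?_
      have h8 := Polynomial.natDegree_X_pow_le (R := R) (e-1-(i:ℕ))
      omega
    · refine natDegree_mul_le.trans ?_
      have h8 := Polynomial.natDegree_X_pow_le (R := R) (d+e-1-(i:ℕ))
      omega
  have key1 : ∀ i : Fin (d+e+1), (i:ℕ) < d+e → ∀ j : Fin (d+e+1),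
      (V * (S * U)) i j = Hf ((X - C α) * σ i) j := by
    intro i hi j
    rw [hVM]
    by_cases hie : (i:ℕ) < e
    · rw [dif_neg (by omega), add_zero, hSU]
      have h3 : ρ i = (X - C α) * σ i := by
        simp only [hρ, hσ, if_pos hie, hp]; ring
      rw [h3]
    · rw [dif_pos ⟨not_lt.mp hie, by omega⟩, hSU, hSU]
      have h3 : ρ i = q * X ^ (d+e-(i:ℕ)) := by simp only [hρ, if_neg hie]
      have h4 : ρ ⟨(i:ℕ)+1, by omega⟩ = q * X ^ (d+e-((i:ℕ)+1)) := by
        simp only [hρ]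
        rw [if_neg (show ¬((i:ℕ)+1 < e) by omega)]
      have h5 : σ i = q * X ^ (d+e-1-(i:ℕ)) := by simp only [hσ, if_neg hie]
      rw [h3, h4, h5]
      have hfact : (X - C α) * (q * X ^ (d+e-1-(i:ℕ)))
          = q * X ^ (d+e-(i:ℕ)) - C α * (q * X ^ (d+e-((i:ℕ)+1))) := by
        have e1 : d+e-(i:ℕ) = (d+e-1-(i:ℕ))+1 := by omega
        have e2 : d+e-((i:ℕ)+1) = d+e-1-(i:ℕ) := by omega
        rw [e1, e2, pow_succ]; ring
      rw [hfact, Hf_lin]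
      ring
  have key2 : ∀ j : Fin (d+e+1), (V * (S * U)) (Fin.last (d+e)) j = Hf q j := by
    intro j
    rw [hVM]
    rw [dif_neg (by rw [Fin.val_last]; omega), add_zero, hSU]
    have h3 : ρ (Fin.last (d+e)) = q := by
      simp only [hρ, Fin.val_last]
      rw [if_neg (by omega), Nat.sub_self, pow_zero, mul_one]
    rw [h3]
  -- determinant assembly
  have hdetT : (V * (S * U)).det = S.det := by
    rw [Matrix.det_mul, Matrix.det_mul, hdetU, hdetV, one_mul, mul_one]
  have hexp : (V * (S * U)).det = q.eval α * (Syl d e f1 q).det := by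
    rw [Matrix.det_succ_column (V * (S * U)) (Fin.last (d+e))]
    rw [Finset.sum_eq_single (Fin.last (d+e))]
    · have hb : (V * (S * U)) (Fin.last (d+e)) (Fin.last (d+e)) = q.eval α := by
        rw [key2, Fin.val_last, heval q (by omega)]
      have hsub : ((V * (S * U)).submatrix
          (Fin.last (d+e)).succAbove (Fin.last (d+e)).succAbove) = Syl d e f1 q := by
        rw [Fin.succAbove_last]
        ext i j
        rw [Matrix.submatrix_apply]
        have hic : ((Fin.castSucc i : Fin (d+e+1)) : ℕ) = (i:ℕ) := rfl
        have hjc : ((Fin.castSucc j : Fin (d+e+1)) : ℕ) = (j:ℕ) := rfl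
        rw [key1 _ (by rw [hic]; exact i.isLt)]
        rw [hjc, hshift _ (hσdeg _ (by rw [hic]; exact i.isLt)) _ (by have := j.isLt; omega)]
        simp only [Syl, Matrix.of_apply, hσ, hic]
        split_ifs <;> rfl
      rw [hb, hsub, Fin.val_last]
      have hsign : ((-1 : R)) ^ (d+e + (d+e)) = 1 := Even.neg_one_pow ⟨d+e, rfl⟩
      rw [hsign, one_mul]
    · intro b _ hb
      have hbv : (b:ℕ) < d+e := by
        have hbl := b.isLt
        rcases Nat.lt_or_ge (b:ℕ) (d+e) with h | h
        · exact h
        · exact absurd (Fin.ext (show (b:ℕ) = d+e by omega)) hb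
      have hz : (V * (S * U)) b (Fin.last (d+e)) = 0 := by
        rw [key1 _ hbv, Fin.val_last, heval _ ?_]
        · rw [eval_mul, eval_sub, eval_X, eval_C, sub_self, zero_mul]
        · refine natDegree_mul_le.trans ?_
          have h6 := hσdeg b hbv
          have h7 : (X - C α).natDegree ≤ 1 := natDegree_X_sub_C_le α
          omega
      rw [hz, mul_zero, zero_mul]
    · intro hc
      exact absurd (Finset.mem_univ _) hc
  rw [← hdetS, ← hdetT, hexp]

lemma res_eq_det {R : Type*} [CommRing R] (d e : ℕ) (p q : Polynomial R)
    (hp : p.natDegree ≤ d) (hq : q.natDegree ≤ e) :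
    res d e p q = (-1 : R) ^ (d * e) * (Syl d e p q).det := by
  unfold res Syl
  congr 2
  ext i j
  have hi := i.isLt
  have hj := j.isLt
  simp only [Matrix.of_apply]
  by_cases hie : (i : ℕ) < e
  · rw [if_pos hie, if_pos hie, Polynomial.coeff_mul_X_pow']
    by_cases h1 : (i : ℕ) ≤ (j : ℕ) ∧ (j : ℕ) ≤ d + (i : ℕ)
    · rw [if_pos h1, if_pos (by omega)]
      congr 1
      omega
    · rw [if_neg h1]
      by_cases h2 : e - 1 - (i : ℕ) ≤ d + e - 1 - (j : ℕ)
      · rw [if_pos h2]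
        exact (Polynomial.coeff_eq_zero_of_natDegree_lt (by omega)).symm
      · rw [if_neg h2]
  · rw [if_neg hie, if_neg hie, Polynomial.coeff_mul_X_pow']
    by_cases h1 : (i : ℕ) - e ≤ (j : ℕ) ∧ (j : ℕ) ≤ (i : ℕ)
    · rw [if_pos h1, if_pos (by omega)]
      congr 1
      omega
    · rw [if_neg h1]
      by_cases h2 : d + e - 1 - (i : ℕ) ≤ d + e - 1 - (j : ℕ)
      · rw [if_pos h2]
        exact (Polynomial.coeff_eq_zero_of_natDegree_lt (by omega)).symm
      · rw [if_neg h2]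

lemma res_step {R : Type*} [CommRing R] (d e : ℕ) (he : 1 ≤ e) (α : R) (f1 q : Polynomial R)
    (hf1 : f1.natDegree ≤ d) (hq : q.natDegree ≤ e) :
    res (d+1) e ((X - C α) * f1) q = (-1:R)^e * (q.eval α * res d e f1 q) := by
  rw [res_eq_det _ _ _ _ (natDegree_mul_le.trans
      (by have := natDegree_X_sub_C_le (R:=R) α; omega)) hq,
    res_eq_det _ _ _ _ hf1 hq, det_Syl_step d e he α f1 q hf1 hq]
  have hpow : (-1:R)^((d+1)*e) = (-1:R)^e * (-1:R)^(d*e) := by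
    rw [add_mul, one_mul, pow_add]; ring
  rw [hpow]; ring

lemma natDegree_prod_lin {R : Type*} [CommRing R] (s : Multiset R) :
    ((s.map fun a => X - C a).prod).natDegree ≤ Multiset.card s := by
  induction s using Multiset.induction with
  | empty => simp
  | cons a t ih =>
    rw [Multiset.map_cons, Multiset.prod_cons, Multiset.card_cons]
    refine natDegree_mul_le.trans ?_
    have := natDegree_X_sub_C_le (R:=R) a
    omega

lemma res_prod {R : Type*} [CommRing R] (e : ℕ) (he : 1 ≤ e) (c : R) (s : Multiset R)
    (q : Polynomial R) (hq : q.natDegree ≤ e) :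
    res (Multiset.card s) e (C c * (s.map fun a => X - C a).prod) q
      = (-1:R)^(Multiset.card s * e) * c^e * (s.map fun a => q.eval a).prod := by
  induction s using Multiset.induction with
  | empty =>
    simp only [Multiset.card_zero, Multiset.map_zero, Multiset.prod_zero, mul_one,
      Nat.zero_mul, pow_zero, one_mul]
    unfold res
    rw [Nat.zero_mul, pow_zero, one_mul]
    have hmat : (Matrix.of fun i j : Fin (0+e) =>
        if (i : ℕ) < e then
          (if (i : ℕ) ≤ (j : ℕ) ∧ (j : ℕ) ≤ 0 + (i : ℕ) then
            (C c).coeff (0 + (i : ℕ) - (j : ℕ)) else 0)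
        else
          (if (i : ℕ) - e ≤ (j : ℕ) ∧ (j : ℕ) ≤ (i : ℕ) then
            q.coeff ((i : ℕ) - (j : ℕ)) else 0))
        = Matrix.diagonal (fun _ => c) := by
      ext i j
      simp only [Matrix.of_apply]
      have hi : (i:ℕ) < e := by have := i.isLt; omega
      rw [if_pos hi]
      by_cases hij : i = j
      · subst hij
        rw [if_pos ⟨le_refl _, by omega⟩, show 0 + (i:ℕ) - (i:ℕ) = 0 by omega,
          coeff_C_zero, Matrix.diagonal_apply_eq]
      · rw [if_neg (fun hc => hij (Fin.ext (by omega))), Matrix.diagonal_apply_ne _ hij]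
    rw [hmat, Matrix.det_diagonal, Finset.prod_const, Finset.card_univ, Fintype.card_fin,
      Nat.zero_add]
  | cons a t ih =>
    rw [Multiset.card_cons, Multiset.map_cons, Multiset.prod_cons]
    have hre : C c * ((X - C a) * (t.map fun x => X - C x).prod)
        = (X - C a) * (C c * (t.map fun x => X - C x).prod) := by ring
    rw [hre, res_step _ _ he _ _ _ (natDegree_mul_le.trans
        (by have h1 := natDegree_prod_lin (R:=R) t; simp [natDegree_C]; omega)) hq, ih]
    rw [Multiset.map_cons, Multiset.prod_cons]
    have hpow : (-1:R)^((Multiset.card t + 1)*e)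
        = (-1:R)^e * (-1:R)^(Multiset.card t * e) := by
      rw [add_mul, one_mul, pow_add]; ring
    rw [hpow]; ring

lemma res_map {R S : Type*} [CommRing R] [CommRing S] (φ : R →+* S) (d e : ℕ)
    (p q : Polynomial R) :
    φ (res d e p q) = res d e (p.map φ) (q.map φ) := by
  unfold res
  rw [map_mul, map_pow, map_neg, map_one, RingHom.map_det]
  congr 1
  congr 1
  rw [RingHom.mapMatrix_apply]
  ext i j
  simp only [Matrix.map_apply, Matrix.of_apply, apply_ite φ, map_zero, Polynomial.coeff_map]

lemma neg_one_pow_sq_nat {K : Type*} [Monoid K] [HasDistribNeg K] (j : ℕ) :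
    (-1:K)^(j*j) = (-1:K)^j := by
  rcases Nat.even_or_odd j with hj | hj
  · rw [hj.neg_one_pow, (hj.mul_right j).neg_one_pow]
  · rw [hj.neg_one_pow, (hj.mul hj).neg_one_pow]

lemma DRnum_map {R S : Type*} [CommRing R] [CommRing S] (φ : R →+* S) (n : ℕ)
    (p q : Polynomial R) :
    (DRnum n p q).map φ = DRnum n (p.map φ) (q.map φ) := by
  unfold DRnum
  have hcomp : (mapRingHom φ).comp (C : R →+* Polynomial R)
      = (C : S →+* Polynomial S).comp φ := by
    ext a
    simp
  have h0 : ∀ w : Polynomial R, Polynomial.map φ w = (mapRingHom φ) w := fun _ => rfl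
  have hX : (mapRingHom φ) (X : Polynomial R) = X := by simp
  rw [h0, res_map]
  congr 1
  · rw [Polynomial.map_map, Polynomial.map_map, hcomp]
  · rw [Polynomial.map_add, Polynomial.map_mul, Polynomial.map_mul, Polynomial.map_mul,
      Polynomial.map_X, Polynomial.map_C, hX, Polynomial.map_map, Polynomial.map_map, hcomp,
      ← Polynomial.map_map, ← Polynomial.map_map, ← derivative_map]

theorem DR_common_factor {k : Type*} [Field k] [CharZero k] (n r : ℕ) (hn : 3 ≤ n)
    (hr : r ≤ n - 1) (u v : k) (h f g : Polynomial k) (hh : h = C u * X + C v)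
    (hf : f.natDegree ≤ n - 1) (hg : g.natDegree ≤ n - 3)
    (ha' : f.coeff 0 * f.coeff (n - 1) ≠ 0)
    (ha : (f * h).coeff 0 * (f * h).coeff n ≠ 0) :
    DR n r (f * h) (g * h) =
      (-1 : k) ^ (n - 1) * (res 1 (n - 1) h f) ^ 2 * DR (n - 1) r f g := by
  classical
  have hf0 : f.coeff 0 ≠ 0 := left_ne_zero_of_mul ha'
  have hfn1 : f.coeff (n-1) ≠ 0 := right_ne_zero_of_mul ha'
  have h0 : (f * h).coeff 0 = f.coeff 0 * v := by
    rw [Polynomial.mul_coeff_zero, hh]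
    simp
  have hcn : (f * h).coeff n = f.coeff (n-1) * u := by
    have hfh : f * h = C u * (f * X) + C v * f := by rw [hh]; ring
    have h1 : (f * X).coeff n = f.coeff (n-1) := by
      conv_lhs => rw [show n = (n-1)+1 by omega]
      rw [Polynomial.coeff_mul_X]
    have h2 : f.coeff n = 0 :=
      coeff_eq_zero_of_natDegree_lt (by omega : f.natDegree < n)
    rw [hfh, coeff_add, coeff_C_mul, coeff_C_mul, h1, h2, mul_zero, add_zero, mul_comm]
  have hv : v ≠ 0 := by
    intro hc
    exact ha (by rw [h0, hc, mul_zero, zero_mul])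
  have hu : u ≠ 0 := by
    intro hc
    exact ha (by rw [hcn, hc, mul_zero, mul_zero])
  have hhdeg : h.natDegree ≤ 1 := by
    rw [hh]
    refine (natDegree_add_le _ _).trans (max_le ?_ ?_)
    · exact (natDegree_C_mul_le _ _).trans natDegree_X_le
    · simp
  set K := AlgebraicClosure k
  set ι : k →+* K := algebraMap k K with hι
  have hinj : Function.Injective ι := ι.injective
  apply hinj
  set F : Polynomial K := f.map ι with hF
  set G : Polynomial K := g.map ι with hG
  set Hp : Polynomial K := h.map ι with hHp
  set cF : K := ι (f.coeff (n-1)) with hcF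
  have hιu : ι u ≠ 0 := fun hc => hu (hinj (by rw [hc, map_zero]))
  have hιv : ι v ≠ 0 := fun hc => hv (hinj (by rw [hc, map_zero]))
  have hιf0 : ι (f.coeff 0) ≠ 0 := fun hc => hf0 (hinj (by rw [hc, map_zero]))
  have hcFne : cF ≠ 0 := fun hc => hfn1 (hinj (by rw [← hcF, hc, map_zero]))
  have hFcoeff : F.coeff (n-1) = cF := by rw [hF, coeff_map, hcF]
  have hFdeg : F.natDegree = n-1 := by
    refine le_antisymm (natDegree_map_le.trans hf) ?_
    exact le_natDegree_of_ne_zero (by rw [hFcoeff]; exact hcFne)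
  have hFne : F ≠ 0 := fun hc => hcFne (by rw [← hFcoeff, hc, coeff_zero])
  have hsplits : Splits F := IsAlgClosed.splits F
  set s : Multiset K := F.roots with hs
  have hscard : Multiset.card s = n-1 := by
    rw [hs, splits_iff_card_roots.mp hsplits, hFdeg]
  have hFfact : F = C cF * (s.map fun a => X - C a).prod := by
    have h1 := hsplits.eq_prod_roots
    have h2 : F.leadingCoeff = cF := by rw [Polynomial.leadingCoeff, hFdeg, hFcoeff]
    rw [hs, ← h2]
    exact h1
  set beta : K := -ι v / ι u with hbeta
  have hβu : beta * ι u = -ι v := by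
    rw [hbeta]; exact div_mul_cancel₀ _ hιu
  have hHfact : Hp = C (ι u) * (X - C beta) := by
    rw [hHp, hh, Polynomial.map_add, Polynomial.map_mul, Polynomial.map_C, Polynomial.map_C,
      Polynomial.map_X, mul_sub, ← C_mul, mul_comm (ι u) beta, hβu, map_neg, sub_neg_eq_add]
  have hFH : (f * h).map ι = C (cF * ι u) * ((beta ::ₘ s).map fun a => X - C a).prod := by
    rw [Polynomial.map_mul, ← hF, ← hHp, hFfact, hHfact, Multiset.map_cons, Multiset.prod_cons,
      C_mul]
    ring
  have hGH : (g * h).map ι = G * Hp := by rw [Polynomial.map_mul, ← hG, ← hHp]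
  have hFHm : (f * h).map ι = F * Hp := by rw [Polynomial.map_mul, ← hF, ← hHp]
  have hevalmap : ∀ (w : Polynomial K) (a : K),
      (w.map (C : K →+* Polynomial K)).eval (C a) = C (w.eval a) := by
    intro w a
    rw [eval_map, eval₂_at_apply]
  set QQ : Polynomial (Polynomial K) :=
    X * (derivative ((f*h).map ι)).map (C : K →+* Polynomial K)
      + C X * X * (((g*h).map ι).map (C : K →+* Polynomial K)) with hQQ
  set Q3 : Polynomial (Polynomial K) :=
    X * (derivative F).map (C : K →+* Polynomial K)
      + C X * X * (G.map (C : K →+* Polynomial K)) with hQ3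
  have hQQeval : ∀ a : K, QQ.eval (C a)
      = C (a * (derivative ((f*h).map ι)).eval a) + X * C (a * ((g*h).map ι).eval a) := by
    intro a
    rw [hQQ, eval_add, eval_mul, eval_mul, eval_mul, eval_X, eval_C, hevalmap, hevalmap]
    rw [C_mul, C_mul]
    ring
  have hQ3eval : ∀ a : K, Q3.eval (C a)
      = C (a * (derivative F).eval a) + X * C (a * G.eval a) := by
    intro a
    rw [hQ3, eval_add, eval_mul, eval_mul, eval_mul, eval_X, eval_C, hevalmap, hevalmap]
    rw [C_mul, C_mul]
    ring
  have hQQs : ∀ a ∈ s, QQ.eval (C a) = C (Hp.eval a) * Q3.eval (C a) := by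
    intro a ha
    have hFa : F.eval a = 0 := by
      have h1 : a ∈ F.roots := by rw [← hs]; exact ha
      exact (Polynomial.mem_roots'.mp h1).2
    have hd : (derivative ((f*h).map ι)).eval a = (derivative F).eval a * Hp.eval a := by
      rw [hFHm, derivative_mul, eval_add, eval_mul, eval_mul, hFa, zero_mul, add_zero]
    have hg2 : ((g*h).map ι).eval a = G.eval a * Hp.eval a := by
      rw [hGH, eval_mul]
    rw [hQQeval, hQ3eval, hd, hg2]
    rw [C_mul, C_mul, C_mul, C_mul, C_mul, C_mul]
    ring
  set pbs : K := (s.map fun a => beta - a).prod with hpbs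
  have hFβ : F.eval beta = cF * pbs := by
    rw [hFfact, eval_mul, eval_C]
    congr 1
    have h1 := map_multiset_prod (Polynomial.evalRingHom beta) (s.map fun a => X - C a)
    simp only [coe_evalRingHom] at h1
    rw [h1, Multiset.map_map, hpbs]
    congr 1
    refine Multiset.map_congr rfl fun a _ => ?_
    simp
  have hHβ : Hp.eval beta = 0 := by rw [hHfact]; simp
  have hQQβ : QQ.eval (C beta) = C (-ι v * (cF * pbs)) := by
    have hd : (derivative ((f*h).map ι)).eval beta = (cF * pbs) * ι u := by
      rw [hFHm, derivative_mul, eval_add, eval_mul, eval_mul, hHβ, mul_zero, zero_add, hFβ]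
      have hd2 : derivative Hp = C (ι u) := by
        rw [hHfact, derivative_mul, derivative_C, derivative_sub, derivative_X, derivative_C]
        simp
      rw [hd2, eval_C]
    have hg2 : ((g*h).map ι).eval beta = 0 := by rw [hGH, eval_mul, hHβ, mul_zero]
    rw [hQQeval, hd, hg2, mul_zero, map_zero, mul_zero, add_zero]
    congr 1
    rw [show beta * (cF * pbs * ι u) = (beta * ι u) * (cF * pbs) by ring, hβu]
  have hghdeg : ((g*h).map ι).natDegree ≤ n-2 := by
    refine natDegree_map_le.trans (natDegree_mul_le.trans ?_)
    omega
  have hQQdeg : QQ.natDegree ≤ n := by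
    rw [hQQ]
    refine (natDegree_add_le _ _).trans (max_le ?_ ?_)
    · refine natDegree_mul_le.trans ?_
      have h1 : ((derivative ((f*h).map ι)).map (C : K →+* Polynomial K)).natDegree
          ≤ n - 1 := by
        refine natDegree_map_le.trans ((natDegree_derivative_le _).trans ?_)
        have h5 : ((f*h).map ι).natDegree ≤ n := by
          refine natDegree_map_le.trans (natDegree_mul_le.trans ?_)
          omega
        omega
      have h2 := natDegree_X_le (R := Polynomial K)
      omega
    · refine natDegree_mul_le.trans ?_
      have h1 : (((g*h).map ι).map (C : K →+* Polynomial K)).natDegree ≤ n-2 :=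
        natDegree_map_le.trans hghdeg
      have h4 : ((C X * X : Polynomial (Polynomial K))).natDegree ≤ 1 := by
        refine natDegree_mul_le.trans ?_
        have h3 : ((C (X : Polynomial K)) : Polynomial (Polynomial K)).natDegree = 0 :=
          natDegree_C _
        have h2 := natDegree_X_le (R := Polynomial K)
        omega
      omega
  have hQ3deg : Q3.natDegree ≤ n-1 := by
    rw [hQ3]
    refine (natDegree_add_le _ _).trans (max_le ?_ ?_)
    · refine natDegree_mul_le.trans ?_
      have h1 : ((derivative F).map (C : K →+* Polynomial K)).natDegree ≤ n-2 := by
        refine natDegree_map_le.trans ((natDegree_derivative_le _).trans ?_)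
        rw [hFdeg]
        omega
      have h2 := natDegree_X_le (R := Polynomial K)
      omega
    · refine natDegree_mul_le.trans ?_
      have h1 : (G.map (C : K →+* Polynomial K)).natDegree ≤ n-3 := by
        refine natDegree_map_le.trans ?_
        rw [hG]
        exact natDegree_map_le.trans hg
      have h4 : ((C X * X : Polynomial (Polynomial K))).natDegree ≤ 1 := by
        refine natDegree_mul_le.trans ?_
        have h3 : ((C (X : Polynomial K)) : Polynomial (Polynomial K)).natDegree = 0 :=
          natDegree_C _
        have h2 := natDegree_X_le (R := Polynomial K)
        omega
      omega
  set ZZ : Polynomial K := (s.map fun a => Q3.eval (C a)).prod with hZZ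
  set PiH : K := (s.map fun a => Hp.eval a).prod with hPiH
  have hCprod : ∀ (m : Multiset K), (m.map (C : K → Polynomial K)).prod = C m.prod := by
    intro m
    have h1 := map_multiset_prod (C : K →+* Polynomial K) m
    rw [← h1]
  have hprodQQ : ((beta ::ₘ s).map fun a => QQ.eval (C a)).prod
      = C (-ι v * (cF * pbs)) * (C PiH * ZZ) := by
    rw [Multiset.map_cons, Multiset.prod_cons, hQQβ]
    refine congrArg (C (-ι v * (cF * pbs)) * ·) ?_
    rw [Multiset.map_congr rfl (fun a ha => hQQs a ha), Multiset.prod_map_mul, hZZ, hPiH]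
    congr 1
    rw [← hCprod, Multiset.map_map]
    rfl
  have hPiHval : PiH = (ι u)^(n-1) * ((-1:K)^(n-1) * pbs) := by
    rw [hPiH]
    have h1 : ∀ a ∈ s, Hp.eval a = ι u * ((-1) * (beta - a)) := by
      intro a _
      rw [hHfact, eval_mul, eval_sub, eval_X, eval_C, eval_C]
      ring
    rw [Multiset.map_congr rfl h1, Multiset.prod_map_mul, Multiset.map_const',
      Multiset.prod_replicate, Multiset.prod_map_mul, Multiset.map_const',
      Multiset.prod_replicate, hscard, ← hpbs]
  have hres_n : res n n (((f*h).map ι).map (C : K →+* Polynomial K)) QQ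
      = C ((-1:K)^n * ((cF * ι u)^n
          * (-ι v * (cF * pbs) * ((ι u)^(n-1) * ((-1:K)^(n-1) * pbs))))) * ZZ := by
    have h1 : ((f*h).map ι).map (C : K →+* Polynomial K)
        = C (C (cF * ι u))
          * (((beta ::ₘ s).map (C : K → Polynomial K)).map fun b => X - C b).prod := by
      rw [hFH, Polynomial.map_mul, Polynomial.map_C]
      congr 1
      have h3 : ∀ w : Polynomial K, Polynomial.map (C : K →+* Polynomial K) w
          = (mapRingHom (C : K →+* Polynomial K)) w := fun _ => rfl
      have h2 := map_multiset_prod (mapRingHom (C : K →+* Polynomial K))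
        ((beta ::ₘ s).map fun a => X - C a)
      rw [h3, h2, Multiset.map_map, Multiset.map_map]
      congr 1
      refine Multiset.map_congr rfl fun a _ => ?_
      simp
    have hcard2 : Multiset.card ((beta ::ₘ s).map (C : K → Polynomial K)) = n := by
      rw [Multiset.card_map, Multiset.card_cons, hscard]
      omega
    have h4 := res_prod (R := Polynomial K) n (by omega) (C (cF * ι u))
      ((beta ::ₘ s).map (C : K → Polynomial K)) QQ hQQdeg
    rw [hcard2] at h4
    rw [h1, h4, Multiset.map_map]
    simp only [Function.comp]
    rw [hprodQQ, hPiHval]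
    have h6 : ((-1 : Polynomial K)) ^ (n*n) = ((-1 : Polynomial K)) ^ n :=
      neg_one_pow_sq_nat n
    rw [h6]
    simp only [map_mul, map_pow, map_neg, map_one]
    ring
  have hres_m : res (n-1) (n-1) (F.map (C : K →+* Polynomial K)) Q3
      = C ((-1:K)^(n-1) * cF^(n-1)) * ZZ := by
    have h1 : F.map (C : K →+* Polynomial K)
        = C (C cF) * ((s.map (C : K → Polynomial K)).map fun b => X - C b).prod := by
      rw [hFfact, Polynomial.map_mul, Polynomial.map_C]
      congr 1
      have h3 : ∀ w : Polynomial K, Polynomial.map (C : K →+* Polynomial K) w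
          = (mapRingHom (C : K →+* Polynomial K)) w := fun _ => rfl
      have h2 := map_multiset_prod (mapRingHom (C : K →+* Polynomial K))
        (s.map fun a => X - C a)
      rw [h3, h2, Multiset.map_map, Multiset.map_map]
      congr 1
      refine Multiset.map_congr rfl fun a _ => ?_
      simp
    have hcard2 : Multiset.card (s.map (C : K → Polynomial K)) = n-1 := by
      rw [Multiset.card_map, hscard]
    have h4 := res_prod (R := Polynomial K) (n-1) (by omega) (C cF)
      (s.map (C : K → Polynomial K)) Q3 hQ3deg
    rw [hcard2] at h4
    rw [h1, h4, Multiset.map_map]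
    simp only [Function.comp]
    have h6 : ((-1 : Polynomial K)) ^ ((n-1)*(n-1)) = ((-1 : Polynomial K)) ^ (n-1) :=
      neg_one_pow_sq_nat (n-1)
    rw [h6, ← hZZ]
    simp only [map_mul, map_pow, map_neg, map_one]
    try ring
  have hres_hf : ι (res 1 (n-1) h f) = (-1:K)^(n-1) * ((ι u)^(n-1) * (cF * pbs)) := by
    rw [res_map ι 1 (n-1) h f]
    have h1 : h.map ι = C (ι u) * (({beta} : Multiset K).map fun a => X - C a).prod := by
      rw [← hHp, hHfact]
      simp
    have h2 : Multiset.card ({beta} : Multiset K) = 1 := rfl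
    have h4 := res_prod (R := K) (n-1) (by omega) (ι u) ({beta} : Multiset K) (f.map ι)
      (by rw [← hF, hFdeg])
    rw [h2] at h4
    rw [h1, h4, Multiset.map_singleton, Multiset.prod_singleton, ← hF, hFβ, one_mul]
    ring
  have hDRn : ι ((DRnum n (f*h) (g*h)).coeff r)
      = ((-1:K)^n * ((cF * ι u)^n
          * (-ι v * (cF * pbs) * ((ι u)^(n-1) * ((-1:K)^(n-1) * pbs))))) * ZZ.coeff r := by
    rw [← Polynomial.coeff_map, DRnum_map]
    have h1 : DRnum n ((f*h).map ι) ((g*h).map ι)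
        = res n n (((f*h).map ι).map (C : K →+* Polynomial K)) QQ := rfl
    rw [h1, hres_n, Polynomial.coeff_C_mul]
  have hDRm : ι ((DRnum (n-1) f g).coeff r)
      = ((-1:K)^(n-1) * cF^(n-1)) * ZZ.coeff r := by
    rw [← Polynomial.coeff_map, DRnum_map]
    have h1 : DRnum (n-1) (f.map ι) (g.map ι)
        = res (n-1) (n-1) (F.map (C : K →+* Polynomial K)) Q3 := rfl
    rw [h1, hres_m, Polynomial.coeff_C_mul]
  have hL : ι (DR n r (f*h) (g*h))
      = (((-1:K)^n * ((cF * ι u)^n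
          * (-ι v * (cF * pbs) * ((ι u)^(n-1) * ((-1:K)^(n-1) * pbs))))) * ZZ.coeff r)
        / ((ι (f.coeff 0) * ι v) * (cF * ι u)) := by
    rw [DR, map_div₀, map_mul, h0, hcn, map_mul, map_mul, hDRn, ← hcF]
  have hR : ι ((-1:k)^(n-1) * res 1 (n-1) h f ^ 2 * DR (n-1) r f g)
      = (-1:K)^(n-1) * ((-1:K)^(n-1) * ((ι u)^(n-1) * (cF * pbs)))^2
        * ((((-1:K)^(n-1) * cF^(n-1)) * ZZ.coeff r) / (ι (f.coeff 0) * cF)) := by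
    rw [map_mul, map_mul, map_pow, map_neg, map_one, map_pow, hres_hf, DR, map_div₀, hDRm,
      map_mul, ← hcF]
  rw [hL, hR]
  obtain ⟨m, rfl⟩ : ∃ m, n = m + 3 := ⟨n - 3, by omega⟩
  have hm1 : m + 3 - 1 = m + 2 := by omega
  rw [hm1]
  set A : K := ι (f.coeff 0) with hA
  set Uu : K := ι u with hUu
  set Vv : K := ι v with hVv
  set Zr : K := ZZ.coeff r with hZr
  have hAne : A ≠ 0 := hιf0
  have hUne : Uu ≠ 0 := hιu
  have hVne : Vv ≠ 0 := hιv
  rcases Nat.even_or_odd m with hpar | hpar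
  · have e1 : ((-1:K))^(m+3) = -1 := by
      rw [pow_add, hpar.neg_one_pow]; norm_num
    have e2 : ((-1:K))^(m+2) = 1 := by
      rw [pow_add, hpar.neg_one_pow]; norm_num
    rw [e1, e2]
    rw [mul_div_assoc', div_eq_div_iff (mul_ne_zero (mul_ne_zero hAne hVne) (mul_ne_zero hcFne hUne)) (mul_ne_zero hAne hcFne)]
    ring
  · have e1 : ((-1:K))^(m+3) = 1 := by
      rw [pow_add, hpar.neg_one_pow]; norm_num
    have e2 : ((-1:K))^(m+2) = -1 := by
      rw [pow_add, hpar.neg_one_pow]; norm_num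
    rw [e1, e2]
    rw [mul_div_assoc', div_eq_div_iff (mul_ne_zero (mul_ne_zero hAne hVne) (mul_ne_zero hcFne hUne)) (mul_ne_zero hAne hcFne)]
    ring
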